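/- Liminf inequality for the penalized Deep Ritz functionals: In the Setting (Assumptions (A1) and (A3) are not needed here), for every x ∈ X and every sequence (x_n) in X converging weakly to x, one has F^f(x) ≤ liminf_{n→∞} F_n^f(x_n). In particular, if γ(x) ≠ 0 then liminf_{n→∞} F_n^f(x_n) = ∞. -/

import Mathlib

open Filter Topology
open scoped Classical

/-- Weak convergence of a sequence in a normed space: convergence tested against
every continuous linear functional. -/
def WeakTendsto {X : Type*} [NormedAddCommGroup X] [NormedSpace ℝ X]
    (u : ℕ → X) (x : X) : Prop :=
  ∀ φ : X →L[ℝ] ℝ, Tendsto (fun n => φ (u n)) atTop (𝓝 (φ x))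

/-- **Liminf inequality for the penalized Deep Ritz functionals.**
In the Deep Ritz setting, for every `x ∈ X` and every sequence `(u n)` converging
weakly to `x` one has `F x ≤ liminf Fn n (u n)`; in particular if `γ x ≠ 0` then
the liminf is `∞`. -/
theorem deep_ritz_liminf_inequality
    {X B : Type*} [NormedAddCommGroup X] [NormedSpace ℝ X] [CompleteSpace X]
    [NormedAddCommGroup B] [NormedSpace ℝ B] [CompleteSpace B]
    (hXrefl : Function.Surjective (NormedSpace.inclusionInDoubleDual ℝ X))
    (hBrefl : Function.Surjective (NormedSpace.inclusionInDoubleDual ℝ B))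
    (γ : X →L[ℝ] B)
    (E : X → ℝ)
    -- E is bounded from below
    (hEbdd : ∃ m : ℝ, ∀ x : X, m ≤ E x)
    -- E is (sequentially) lower semicontinuous w.r.t. the weak topology of X
    (hElsc : ∀ (x : X) (u : ℕ → X), WeakTendsto u x →
      ((E x : EReal)) ≤ liminf (fun n => ((E (u n) : EReal))) atTop)
    -- E is continuous w.r.t. the norm topology of X
    (hEcont : Continuous E)
    (p : ℝ) (hp : 1 < p)
    (f : X →L[ℝ] ℝ)
    (lam : ℕ → ℝ) (hlam_pos : ∀ n, 0 < lam n) (hlam : Tendsto lam atTop atTop)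
    (A : ℕ → Set X)
    -- the penalized functionals
    (Fn : ℕ → X → EReal)
    (hFn : ∀ (n : ℕ) (x : X), Fn n x =
      if x ∈ A n then ((E x + lam n * ‖γ x‖ ^ p - f x : ℝ) : EReal) else ⊤)
    -- the limit functional
    (F : X → EReal)
    (hF : ∀ x : X, F x = if γ x = 0 then ((E x - f x : ℝ) : EReal) else ⊤) :
    (∀ (x : X) (u : ℕ → X), WeakTendsto u x →
        F x ≤ liminf (fun n => Fn n (u n)) atTop) ∧
      (∀ (x : X) (u : ℕ → X), WeakTendsto u x → γ x ≠ 0 →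
        liminf (fun n => Fn n (u n)) atTop = ⊤) := by
  obtain ⟨m, hm⟩ := hEbdd
  -- The divergence statement, proved first.
  have key : ∀ (x : X) (u : ℕ → X), WeakTendsto u x → γ x ≠ 0 →
      liminf (fun n => Fn n (u n)) atTop = ⊤ := by
    intro x u hu hγ
    obtain ⟨g, hg1, hgx⟩ := exists_dual_vector ℝ (γ x) (norm_ne_zero_iff.2 hγ)
    set c : ℝ := ‖γ x‖ / 2 with hc
    have hcpos : 0 < c := by
      have := norm_pos_iff.2 hγ; simp only [hc]; linarith
    -- eventually ‖γ (u n)‖ ≥ c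
    have htend : Tendsto (fun n => g (γ (u n))) atTop (𝓝 (‖γ x‖)) := by
      have := hu (g.comp γ)
      simpa [hgx] using this
    have hnorm_ev : ∀ᶠ n in atTop, c ≤ ‖γ (u n)‖ := by
      have : ∀ᶠ n in atTop, c < g (γ (u n)) := by
        apply htend.eventually_const_lt
        simp only [hc]
        linarith [norm_pos_iff.2 hγ]
      filter_upwards [this] with n hn
      have : g (γ (u n)) ≤ ‖γ (u n)‖ := by
        calc g (γ (u n)) ≤ |g (γ (u n))| := le_abs_self _
          _ ≤ ‖g‖ * ‖γ (u n)‖ := g.le_opNorm _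
          _ = ‖γ (u n)‖ := by rw [hg1, one_mul]
      linarith
    -- eventually f (u n) ≤ f x + 1
    have hf_ev : ∀ᶠ n in atTop, f (u n) ≤ f x + 1 :=
      ((hu f).eventually_le_const (by linarith))
    -- real lower bound tending to ∞
    have hcp : (0:ℝ) < c ^ p := Real.rpow_pos_of_pos hcpos p
    have hdiv : Tendsto (fun n => m + lam n * c ^ p - (f x + 1)) atTop atTop := by
      apply Tendsto.atTop_add _ tendsto_const_nhds
      have := (tendsto_const_mul_atTop_iff_pos hlam).mpr hcp
      simp only [mul_comm] at this
      exact tendsto_atTop_add_const_left _ m this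
    have hT : Tendsto (fun n => Fn n (u n)) atTop (𝓝 ⊤) := by
      rw [EReal.tendsto_nhds_top_iff_real]
      intro M
      filter_upwards [hnorm_ev, hf_ev, hdiv.eventually_gt_atTop M] with n h1 h2 h3
      rw [hFn]
      by_cases hA : u n ∈ A n
      · rw [if_pos hA]
        have hlb : m + lam n * c ^ p - (f x + 1) ≤ E (u n) + lam n * ‖γ (u n)‖ ^ p - f (u n) := by
          have hmul : lam n * c ^ p ≤ lam n * ‖γ (u n)‖ ^ p := by
            apply mul_le_mul_of_nonneg_left _ (hlam_pos n).le
            exact Real.rpow_le_rpow hcpos.le h1 (by linarith)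
          have := hm (u n)
          linarith
        exact_mod_cast lt_of_lt_of_le h3 hlb
      · rw [if_neg hA]; exact EReal.coe_lt_top M
    exact hT.liminf_eq
  refine ⟨?_, key⟩
  intro x u hu
  rw [hF]
  by_cases hγ : γ x = 0
  · rw [if_pos hγ]
    -- pointwise lower bound: Fn n (u n) ≥ E (u n) + (- f (u n))
    have hpt : ∀ n, ((E (u n) : EReal)) + (((-(f (u n)) : ℝ)) : EReal) ≤ Fn n (u n) := by
      intro n
      rw [hFn]
      by_cases hA : u n ∈ A n
      · rw [if_pos hA]
        have h0 : 0 ≤ lam n * ‖γ (u n)‖ ^ p :=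
          mul_nonneg (hlam_pos n).le (Real.rpow_nonneg (norm_nonneg _) p)
        have : E (u n) + (-(f (u n))) ≤ E (u n) + lam n * ‖γ (u n)‖ ^ p - f (u n) := by
          linarith
        exact_mod_cast this
      · rw [if_neg hA]; exact le_top
    have hlim1 : liminf (fun n => ((E (u n) : EReal)) + (((-(f (u n)) : ℝ)) : EReal)) atTop
        ≤ liminf (fun n => Fn n (u n)) atTop :=
      liminf_le_liminf (Eventually.of_forall hpt)
    have hlim2 : liminf (fun n => ((E (u n) : EReal))) atTop
          + liminf (fun n => (((-(f (u n)) : ℝ)) : EReal)) atTop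
        ≤ liminf (fun n => ((E (u n) : EReal)) + (((-(f (u n)) : ℝ)) : EReal)) atTop :=
      EReal.le_liminf_add
    have hf_lim : liminf (fun n => (((-(f (u n)) : ℝ)) : EReal)) atTop = ((-(f x) : ℝ) : EReal) :=
      (EReal.tendsto_coe.2 (hu f).neg).liminf_eq
    have hE_lim := hElsc x u hu
    calc ((E x - f x : ℝ) : EReal)
        = ((E x : ℝ) : EReal) + ((-(f x) : ℝ) : EReal) := by
          rw [← EReal.coe_add]; norm_cast
      _ ≤ liminf (fun n => ((E (u n) : EReal))) atTop
          + liminf (fun n => (((-(f (u n)) : ℝ)) : EReal)) atTop := by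
          rw [hf_lim]; exact add_le_add_left hE_lim _
      _ ≤ _ := le_trans hlim2 hlim1
  · rw [if_neg hγ, key x u hu hγ]
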